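/- Let λ, μ ∈ ℝ with λ < 0 < μ. Let s : ℝ × ℝ → ℝ and z : ℝ × ℝ → ℝ be continuously differentiable functions satisfying: (i) μ·s(x,X) = s(z(x,X), λX) for all (x,X) ∈ ℝ²; (ii) s(λx, z(x,X)) + s(λX, z(x,X)) = 0 for all (x,X) ∈ ℝ²; (iii) z(1,0) = 1; (iv) ∂₁z(1,0) = μ; (v) ∂₁s(a,b) > 0 for all (a,b) ∈ ℝ². Then ∂₂s(1,0) > 0, and consequently −∂₂s(1,0)/∂₁s(1,0) < 0. -/

import Mathlib

noncomputable section

private lemma hasDerivAt_comp2 {f : ℝ × ℝ → ℝ} (hf : ContDiff ℝ 1 f)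
    {u v : ℝ → ℝ} {u' v' t : ℝ} (hu : HasDerivAt u u' t) (hv : HasDerivAt v v' t) :
    HasDerivAt (fun t => f (u t, v t))
      (u' * fderiv ℝ f (u t, v t) (1, 0) + v' * fderiv ℝ f (u t, v t) (0, 1)) t := by
  have hder := ((hf.differentiable one_ne_zero) (u t, v t)).hasFDerivAt
  have h := hder.comp_hasDerivAt t (hu.prodMk hv)
  refine HasDerivAt.congr_deriv h ?_
  have he : ((u', v') : ℝ × ℝ) = u' • ((1 : ℝ), (0 : ℝ)) + v' • ((0 : ℝ), (1 : ℝ)) := by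
    simp [Prod.ext_iff]
  rw [he, map_add, map_smul, map_smul, smul_eq_mul, smul_eq_mul]

/-- Lemma 4.1 of the paper: at the tip of the Eckmann–Koch–Wittwer renormalization
fixed point one has `∂₂s(1,0) > 0`, hence `∂X/∂x(τ) = -∂₂s(1,0)/∂₁s(1,0) < 0`.
Here `∂₁f(a,b) = fderiv ℝ f (a,b) (1,0)` and `∂₂f(a,b) = fderiv ℝ f (a,b) (0,1)`. -/
theorem ekw_tip_derivative_neg
    (lam mu : ℝ) (hlam : lam < 0) (hmu : 0 < mu)
    (s z : ℝ × ℝ → ℝ) (hs : ContDiff ℝ 1 s) (hz : ContDiff ℝ 1 z)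
    -- (i) the EKW fixed point equation μ·s(x,X) = s(z(x,X), λX)
    (hfix : ∀ x X : ℝ, mu * s (x, X) = s (z (x, X), lam * X))
    -- (ii) the defining equation of the midpoint function z
    (hmid : ∀ x X : ℝ, s (lam * x, z (x, X)) + s (lam * X, z (x, X)) = 0)
    -- (iii) normalization z(1,0) = 1
    (hz10 : z (1, 0) = 1)
    -- (iv) normalization ∂₁z(1,0) = μ
    (hz1 : fderiv ℝ z (1, 0) (1, 0) = mu)
    -- (v) negative twist condition: ∂₁s > 0 everywhere
    (hs1pos : ∀ p : ℝ × ℝ, 0 < fderiv ℝ s p (1, 0)) :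
    0 < fderiv ℝ s (1, 0) (0, 1) ∧
      -(fderiv ℝ s (1, 0) (0, 1)) / fderiv ℝ s (1, 0) (1, 0) < 0 := by
  -- abbreviations
  set a := fderiv ℝ s (1, 0) (1, 0) with ha
  set b := fderiv ℝ s (1, 0) (0, 1) with hb
  set c := fderiv ℝ s (lam, 1) (1, 0) with hc
  set d := fderiv ℝ s (lam, 1) (0, 1) with hd
  set e := fderiv ℝ s (0, 1) (1, 0) with he
  set f := fderiv ℝ s (0, 1) (0, 1) with hf
  set q := fderiv ℝ z (1, 0) (0, 1) with hq
  have hapos : 0 < a := hs1pos _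
  have hcpos : 0 < c := hs1pos _
  have hepos : 0 < e := hs1pos _
  -- some basic derivatives
  have hid0 : HasDerivAt (fun X : ℝ => X) 1 0 := hasDerivAt_id 0
  have hid1 : HasDerivAt (fun x : ℝ => x) 1 1 := hasDerivAt_id 1
  -- derivative of X ↦ z (1, X) at 0 is q
  have hzX : HasDerivAt (fun X : ℝ => z (1, X)) q 0 := by
    have := hasDerivAt_comp2 hz (hasDerivAt_const 0 (1:ℝ)) hid0
    simpa using this
  -- derivative of x ↦ z (x, 0) at 1 is mu
  have hzx : HasDerivAt (fun x : ℝ => z (x, 0)) mu 1 := by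
    have := hasDerivAt_comp2 hz hid1 (hasDerivAt_const 1 (0:ℝ))
    simpa [hz1] using this
  -- Equation (i) differentiated in X at (1,0):  mu * b = q * a + lam * b
  have E1 : mu * b = q * a + lam * b := by
    have hL : HasDerivAt (fun X : ℝ => mu * s (1, X)) (mu * b) 0 := by
      have := hasDerivAt_comp2 hs (hasDerivAt_const 0 (1:ℝ)) hid0
      simpa [hb] using this.const_mul mu
    have hR : HasDerivAt (fun X : ℝ => s (z (1, X), lam * X)) (q * a + lam * b) 0 := by
      have hlin : HasDerivAt (fun X : ℝ => lam * X) lam 0 := by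
        simpa using hid0.const_mul lam
      have := hasDerivAt_comp2 hs hzX hlin
      simpa [hz10, ha, hb] using this
    have hfun : (fun X : ℝ => mu * s (1, X)) = fun X : ℝ => s (z (1, X), lam * X) :=
      funext fun X => hfix 1 X
    exact (hfun ▸ hL).unique hR
  -- Equation (ii) differentiated in x at (1,0):  lam*c + mu*d + mu*f = 0
  have E2 : lam * c + mu * d + mu * f = 0 := by
    have h1 : HasDerivAt (fun x : ℝ => s (lam * x, z (x, 0))) (lam * c + mu * d) 1 := by
      have hlin : HasDerivAt (fun x : ℝ => lam * x) lam 1 := by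
        simpa using hid1.const_mul lam
      have := hasDerivAt_comp2 hs hlin hzx
      simpa [hz10, hc, hd] using this
    have h2 : HasDerivAt (fun x : ℝ => s (lam * 0, z (x, 0))) (mu * f) 1 := by
      have := hasDerivAt_comp2 hs (hasDerivAt_const 1 (lam * 0)) hzx
      simpa [hz10, he, hf] using this
    have hsum : HasDerivAt (fun x : ℝ => s (lam * x, z (x, 0)) + s (lam * 0, z (x, 0))) (lam * c + mu * d + mu * f) 1 := h1.add h2
    have hfun : (fun x : ℝ => s (lam * x, z (x, 0)) + s (lam * 0, z (x, 0)))
        = fun _ : ℝ => (0 : ℝ) := funext fun x => hmid x 0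
    have hzero : HasDerivAt (fun _ : ℝ => (0 : ℝ)) 0 1 := hasDerivAt_const 1 0
    have := (hfun ▸ hsum).unique hzero
    linarith [this]
  -- Equation (ii) differentiated in X at (1,0):  q*d + lam*e + q*f = 0
  have E3 : q * d + (lam * e + q * f) = 0 := by
    have h1 : HasDerivAt (fun X : ℝ => s (lam * 1, z (1, X))) (q * d) 0 := by
      have := hasDerivAt_comp2 hs (hasDerivAt_const 0 (lam * 1)) hzX
      simpa [hz10, hd] using this
    have h2 : HasDerivAt (fun X : ℝ => s (lam * X, z (1, X))) (lam * e + q * f) 0 := by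
      have hlin : HasDerivAt (fun X : ℝ => lam * X) lam 0 := by
        simpa using hid0.const_mul lam
      have := hasDerivAt_comp2 hs hlin hzX
      simpa [hz10, he, hf] using this
    have hsum : HasDerivAt (fun X : ℝ => s (lam * 1, z (1, X)) + s (lam * X, z (1, X))) (q * d + (lam * e + q * f)) 0 := h1.add h2
    have hfun : (fun X : ℝ => s (lam * 1, z (1, X)) + s (lam * X, z (1, X)))
        = fun _ : ℝ => (0 : ℝ) := funext fun X => hmid 1 X
    have hzero : HasDerivAt (fun _ : ℝ => (0 : ℝ)) 0 0 := hasDerivAt_const 0 0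
    exact (hfun ▸ hsum).unique hzero
  -- From E2 : d + f = -lam*c/mu > 0
  have hdf : 0 < d + f := by
    have : mu * (d + f) = -lam * c := by linarith
    nlinarith
  -- From E3 : q > 0
  have hqpos : 0 < q := by
    have : q * (d + f) = -lam * e := by linarith
    nlinarith
  -- From E1 : b > 0
  have hbpos : 0 < b := by
    have : (mu - lam) * b = q * a := by linarith
    nlinarith
  exact ⟨hbpos, div_neg_of_neg_of_pos (neg_neg_of_pos hbpos) hapos⟩
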